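/- There exist indices a≠b in {1,…,n} such that v_a and v_b are orthogonal if and only if the minimum of Max-Dist(S_a,S_b) over all pairs a≠b is at most (2d+1)·M + 1. -/

import Mathlib

open Finset

namespace OVGadget

inductive V (n d : ℕ) : Type
  | U : Fin n → Fin d → V n d
  | U' : Fin n → Fin d → V n d
  | l : V n d
  | r : V n d
  deriving DecidableEq, Fintype

def M : ℕ := 4

/-- One-directional edge-weight table encoding the vectors `v_1, …, v_n`; a value `0` means
"no edge".  Here `j : Fin d` is 0-indexed, so `U k j` is the paper's `u_{k+1, j+1}`, whence
the weights `(j+1)·M + v_k[j]` and `(2d+1−(j+1))·M + v_k[j] = (2d−j)·M + v_k[j]`. -/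
def wt0 (n d : ℕ) (v : Fin n → Fin d → Fin 2) : V n d → V n d → ℕ
  | V.U k j, V.l => (j.val + 1) * M + (v k j).val
  | V.U' k j, V.l => (2 * d - j.val) * M + (v k j).val
  | V.U k j, V.r => (2 * d - j.val) * M + (v k j).val
  | V.U' k j, V.r => (j.val + 1) * M + (v k j).val
  | _, _ => 0

/-- The symmetrized edge weight. -/
def wtE (n d : ℕ) (v : Fin n → Fin d → Fin 2) (x y : V n d) : ℕ :=
  wt0 n d v x y + wt0 n d v y x

/-- The graph `G`: `x` and `y` are adjacent iff the weight table records an edge. -/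
def G (n d : ℕ) (v : Fin n → Fin d → Fin 2) : SimpleGraph (V n d) :=
  SimpleGraph.fromRel fun x y => wt0 n d v x y ≠ 0

/-- The total weight of a walk. -/
def wWeight {n d : ℕ} {v : Fin n → Fin d → Fin 2} {x y : V n d}
    (p : (G n d v).Walk x y) : ℕ :=
  (p.darts.map fun e => wtE n d v e.toProd.1 e.toProd.2).sum

/-- The weighted shortest-path distance: the minimum over paths from `x` to `y` of the sum
of the edge weights along the path. -/
noncomputable def dist (n d : ℕ) (v : Fin n → Fin d → Fin 2) (x y : V n d) : ℕ :=
  sInf {m | ∃ p : (G n d v).Walk x y, p.IsPath ∧ wWeight p = m}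

/-- Membership in the set `S_k = {u_{k,j}, u'_{k,j} : j}`. -/
def inS (n d : ℕ) (k : Fin n) (x : V n d) : Prop :=
  (∃ j : Fin d, x = V.U k j) ∨ (∃ j : Fin d, x = V.U' k j)

/-- The set `S_k` as a finite set of vertices. -/
def SF (n d : ℕ) (k : Fin n) : Finset (V n d) :=
  (Finset.univ.image fun j : Fin d => V.U k j)
    ∪ (Finset.univ.image fun j : Fin d => V.U' k j)

/-- `Max-Dist(S_a, S_b) = max_{x ∈ S_a, y ∈ S_b} d(x, y)`. -/
noncomputable def maxDist (n d : ℕ) (v : Fin n → Fin d → Fin 2) (a b : Fin n) : ℕ :=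
  (SF n d a ×ˢ SF n d b).sup fun p => dist n d v p.1 p.2
section Helpers

variable {n d : ℕ} {v : Fin n → Fin d → Fin 2}

/-- `x` is one of the `u`-vertices. -/
def isU {n d : ℕ} (x : V n d) : Prop :=
  (∃ k j, x = V.U k j) ∨ (∃ k j, x = V.U' k j)

lemma wtE_comm (x y : V n d) : wtE n d v x y = wtE n d v y x := Nat.add_comm _ _

lemma wtE_Ul (k : Fin n) (j : Fin d) :
    wtE n d v (V.U k j) V.l = (j.val + 1) * 4 + (v k j).val := by
  simp [wtE, wt0, M]

lemma wtE_Ur (k : Fin n) (j : Fin d) :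
    wtE n d v (V.U k j) V.r = (2 * d - j.val) * 4 + (v k j).val := by
  simp [wtE, wt0, M]

lemma wtE_U'l (k : Fin n) (j : Fin d) :
    wtE n d v (V.U' k j) V.l = (2 * d - j.val) * 4 + (v k j).val := by
  simp [wtE, wt0, M]

lemma wtE_U'r (k : Fin n) (j : Fin d) :
    wtE n d v (V.U' k j) V.r = (j.val + 1) * 4 + (v k j).val := by
  simp [wtE, wt0, M]

lemma adj_Ul (k : Fin n) (j : Fin d) : (G n d v).Adj (V.U k j) V.l := by
  simp [G, SimpleGraph.fromRel_adj, wt0, M]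

lemma adj_Ur (k : Fin n) (j : Fin d) : (G n d v).Adj (V.U k j) V.r := by
  have := j.isLt
  simp [G, SimpleGraph.fromRel_adj, wt0, M]
  omega

lemma adj_U'l (k : Fin n) (j : Fin d) : (G n d v).Adj (V.U' k j) V.l := by
  have := j.isLt
  simp [G, SimpleGraph.fromRel_adj, wt0, M]
  omega

lemma adj_U'r (k : Fin n) (j : Fin d) : (G n d v).Adj (V.U' k j) V.r := by
  simp [G, SimpleGraph.fromRel_adj, wt0, M]

lemma adj_xl {x : V n d} (hx : isU x) : (G n d v).Adj x V.l := by
  rcases hx with ⟨k, j, rfl⟩ | ⟨k, j, rfl⟩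
  · exact adj_Ul k j
  · exact adj_U'l k j

lemma adj_xr {x : V n d} (hx : isU x) : (G n d v).Adj x V.r := by
  rcases hx with ⟨k, j, rfl⟩ | ⟨k, j, rfl⟩
  · exact adj_Ur k j
  · exact adj_U'r k j

lemma ctr_of_adj_isU {x m : V n d} (hx : isU x) (h : (G n d v).Adj x m) :
    m = V.l ∨ m = V.r := by
  rcases hx with ⟨k, j, rfl⟩ | ⟨k, j, rfl⟩ <;>
    rcases m with ⟨k2, j2⟩ | ⟨k2, j2⟩ | _ | _ <;>
    simp_all [G, SimpleGraph.fromRel_adj, wt0]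

lemma isU_of_adj_ctr {m z : V n d} (hm : m = V.l ∨ m = V.r) (h : (G n d v).Adj m z) :
    isU z := by
  rcases hm with rfl | rfl <;>
    rcases z with ⟨k, j⟩ | ⟨k, j⟩ | _ | _ <;>
    simp_all [G, SimpleGraph.fromRel_adj, wt0, isU]

lemma isU_ne_ctr {x : V n d} (hx : isU x) : x ≠ V.l ∧ x ≠ V.r := by
  rcases hx with ⟨k, j, rfl⟩ | ⟨k, j, rfl⟩ <;> simp

/-- basic numeric bounds on the edge weights at a `u`-vertex. -/
lemma wtE_bounds {x : V n d} (hx : isU x) :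
    4 ≤ wtE n d v x V.l ∧ wtE n d v x V.l ≤ 8 * d + 1 ∧
    4 ≤ wtE n d v x V.r ∧ wtE n d v x V.r ≤ 8 * d + 1 ∧
    8 * d + 4 ≤ wtE n d v x V.l + wtE n d v x V.r := by
  rcases hx with ⟨k, j, rfl⟩ | ⟨k, j, rfl⟩ <;>
    · have h1 := j.isLt
      have h2 := (v k j).isLt
      simp [wtE_Ul, wtE_Ur, wtE_U'l, wtE_U'r]
      omega

lemma wWeight_cons {x m y : V n d} (h : (G n d v).Adj x m) (q : (G n d v).Walk m y) :
    wWeight (SimpleGraph.Walk.cons h q) = wtE n d v x m + wWeight q := by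
  simp [wWeight]

/-- Lower bound on the weight of any path between two `u`-vertices. -/
lemma path_lower {x y : V n d} (hx : isU x) (hy : isU y) (hxy : x ≠ y)
    (p : (G n d v).Walk x y) (hp : p.IsPath) :
    min (wtE n d v x V.l + wtE n d v y V.l) (wtE n d v x V.r + wtE n d v y V.r)
      ≤ wWeight p := by
  cases p with
  | nil => exact absurd rfl hxy
  | @cons _ m _ h1 q =>
    have hm : m = V.l ∨ m = V.r := ctr_of_adj_isU hx h1
    cases q with
    | nil =>
      rcases hm with rfl | rfl <;>
        (rcases hy with ⟨k, j, h⟩ | ⟨k, j, h⟩ <;> exact nomatch h)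
    | @cons _ z _ h2 q2 =>
      have hz : isU z := isU_of_adj_ctr hm h2
      cases q2 with
      | nil =>
        -- 2-edge path x - m - y (here z = y)
        rw [wWeight_cons, wWeight_cons, wWeight, SimpleGraph.Walk.darts_nil]
        simp only [List.map_nil, List.sum_nil, Nat.add_zero]
        rcases hm with rfl | rfl
        · rw [wtE_comm (V.l)]
          exact min_le_left _ _
        · rw [wtE_comm (V.r)]
          exact min_le_right _ _
      | @cons _ m2 _ h3 q3 =>
        have hm2 : m2 = V.l ∨ m2 = V.r := ctr_of_adj_isU hz h3
        have hnd := hp.support_nodup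
        simp only [SimpleGraph.Walk.support_cons, List.nodup_cons] at hnd
        have hmm2 : m ≠ m2 := by
          intro h
          exact hnd.2.1 (by rw [h]; exact List.mem_cons_of_mem _ q3.start_mem_support)
        cases q3 with
        | nil =>
          rcases hm2 with rfl | rfl <;>
            (rcases hy with ⟨k, j, h⟩ | ⟨k, j, h⟩ <;> exact nomatch h)
        | @cons _ z2 _ h4 q4 =>
          have hz2 : isU z2 := isU_of_adj_ctr hm2 h4
          cases q4 with
          | nil =>
            -- 4-edge path x - m - z - m2 - y  (z2 = y)
            rw [wWeight_cons, wWeight_cons, wWeight_cons, wWeight_cons, wWeight,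
              SimpleGraph.Walk.darts_nil]
            simp only [List.map_nil, List.sum_nil, Nat.add_zero]
            have bz := wtE_bounds (v := v) hz
            have by' := wtE_bounds (v := v) hy
            have bx := wtE_bounds (v := v) hx
            rcases hm with rfl | rfl
            · have hm2' : m2 = V.r := hm2.resolve_left (fun h => hmm2 h.symm)
              subst hm2'
              rw [wtE_comm V.l z, wtE_comm V.r y]
              have : min (wtE n d v x V.l + wtE n d v y V.l)
                  (wtE n d v x V.r + wtE n d v y V.r) ≤
                  wtE n d v x V.l + wtE n d v y V.l := min_le_left _ _
              omega
            · have hm2' : m2 = V.l := hm2.resolve_right (fun h => hmm2 h.symm)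
              subst hm2'
              rw [wtE_comm V.r z, wtE_comm V.l y]
              have : min (wtE n d v x V.l + wtE n d v y V.l)
                  (wtE n d v x V.r + wtE n d v y V.r) ≤
                  wtE n d v x V.r + wtE n d v y V.r := min_le_right _ _
              omega
          | @cons _ m3 _ h5 q5 =>
            -- the path would need a third centre vertex: impossible
            exfalso
            have hm3 : m3 = V.l ∨ m3 = V.r := ctr_of_adj_isU hz2 h5
            have hmem : m3 ∈ q5.support.cons z2 := by
              exact List.mem_cons_of_mem _ q5.start_mem_support
            have h1' : m ≠ m3 := by
              intro h
              apply hnd.2.1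
              rw [h]
              simp only [SimpleGraph.Walk.support_cons]
              exact List.mem_cons_of_mem _ (List.mem_cons_of_mem _ hmem)
            have hnd3 := hnd.2.2.2
            simp only [SimpleGraph.Walk.support_cons, List.nodup_cons] at hnd3
            have h2' : m2 ≠ m3 := by
              intro h
              apply hnd3.1
              rw [h]
              exact List.mem_cons_of_mem _ q5.start_mem_support
            rcases hm with rfl | rfl <;> rcases hm2 with rfl | rfl <;>
              rcases hm3 with rfl | rfl <;> simp_all

/-- The distance is at most the weight of any 2-edge path. -/
lemma dist_le_two {x y m : V n d} (h1 : (G n d v).Adj x m) (h2 : (G n d v).Adj m y)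
    (hxy : x ≠ y) :
    dist n d v x y ≤ wtE n d v x m + wtE n d v m y := by
  apply Nat.sInf_le
  refine ⟨SimpleGraph.Walk.cons h1 (SimpleGraph.Walk.cons h2 SimpleGraph.Walk.nil), ?_, ?_⟩
  · have hxm := h1.ne
    have hmy := h2.ne
    simp [SimpleGraph.Walk.isPath_def, hxm, hmy, hxy]
  · rw [wWeight_cons, wWeight_cons, wWeight, SimpleGraph.Walk.darts_nil]
    simp

/-- Lower bound on the distance between two `u`-vertices. -/
lemma dist_lower {x y : V n d} (hx : isU x) (hy : isU y) (hxy : x ≠ y) :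
    min (wtE n d v x V.l + wtE n d v y V.l) (wtE n d v x V.r + wtE n d v y V.r)
      ≤ dist n d v x y := by
  have hne : {m | ∃ p : (G n d v).Walk x y, p.IsPath ∧ wWeight p = m}.Nonempty := by
    refine ⟨_, SimpleGraph.Walk.cons (adj_xl hx)
      (SimpleGraph.Walk.cons ((adj_xl hy).symm) SimpleGraph.Walk.nil), ?_, rfl⟩
    have h1 := (isU_ne_ctr hx).1
    have h2 : ¬ (V.l = y) := fun h => (isU_ne_ctr hy).1 h.symm
    simp [SimpleGraph.Walk.isPath_def, h1, hxy, h2]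
  obtain ⟨p, hp, hw⟩ := Nat.sInf_mem hne
  rw [dist, ← hw]
  exact path_lower hx hy hxy p hp

lemma mem_SF_U (a : Fin n) (j : Fin d) : V.U a j ∈ SF n d a := by simp [SF]

lemma mem_SF_U' (a : Fin n) (j : Fin d) : V.U' a j ∈ SF n d a := by simp [SF]

lemma mem_SF_iff {a : Fin n} {x : V n d} :
    x ∈ SF n d a ↔ (∃ j, x = V.U a j) ∨ (∃ j, x = V.U' a j) := by
  simp [SF, eq_comm]

end Helpers

/-- There is an orthogonal pair of vectors iff the minimum of `Max-Dist` over all pairs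
`a ≠ b` is at most `(2d+1)·M + 1`. -/
theorem orthogonal_iff_maxDist (n d : ℕ) (hn : 2 ≤ n) (hd : 1 ≤ d)
    (v : Fin n → Fin d → Fin 2) :
    (∃ a b : Fin n, a ≠ b ∧ ∀ i : Fin d, (v a i).val * (v b i).val = 0)
    ↔ (∃ a b : Fin n, a ≠ b ∧ maxDist n d v a b ≤ (2 * d + 1) * M + 1) := by
  have hM : M = 4 := rfl
  constructor
  · rintro ⟨a, b, hab, horth⟩
    refine ⟨a, b, hab, ?_⟩
    rw [maxDist, hM]
    apply Finset.sup_le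
    rintro ⟨x, y⟩ hxy
    dsimp only
    rw [Finset.mem_product] at hxy
    obtain ⟨hx, hy⟩ := hxy
    rw [mem_SF_iff] at hx hy
    have hab' : ∀ (i j : Fin d), V.U a i ≠ V.U b j := by
      intro i j h
      cases h; exact hab rfl
    have hab'' : ∀ (i j : Fin d), V.U' a i ≠ V.U' b j := by
      intro i j h
      cases h; exact hab rfl
    rcases hx with ⟨i, rfl⟩ | ⟨i, rfl⟩ <;> rcases hy with ⟨j, rfl⟩ | ⟨j, rfl⟩
    · -- U a i, U b j : go through l
      have h := dist_le_two (v := v) (adj_Ul a i) (adj_Ul b j).symm (hab' i j)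
      rw [wtE_comm V.l, wtE_Ul, wtE_Ul] at h
      have := i.isLt; have := j.isLt
      omega
    · -- U a i, U' b j : depends on i vs j
      have hl := dist_le_two (v := v) (adj_Ul a i) (adj_U'l b j).symm (by simp)
      have hr := dist_le_two (v := v) (adj_Ur a i) (adj_U'r b j).symm (by simp)
      rw [wtE_comm V.l, wtE_Ul, wtE_U'l] at hl
      rw [wtE_comm V.r, wtE_Ur, wtE_U'r] at hr
      have hi := i.isLt; have hj := j.isLt
      have h2 : (v a i).val < 2 := (v a i).isLt
      have h3 : (v b j).val < 2 := (v b j).isLt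
      by_cases hij : i = j
      · subst hij
        have horthi := horth i
        rw [Nat.mul_eq_zero] at horthi
        rcases horthi with h0 | h0 <;> omega
      · have : i.val ≠ j.val := fun h => hij (Fin.ext h)
        omega
    · -- U' a i, U b j
      have hl := dist_le_two (v := v) (adj_U'l a i) (adj_Ul b j).symm (by simp)
      have hr := dist_le_two (v := v) (adj_U'r a i) (adj_Ur b j).symm (by simp)
      rw [wtE_comm V.l, wtE_U'l, wtE_Ul] at hl
      rw [wtE_comm V.r, wtE_U'r, wtE_Ur] at hr
      have hi := i.isLt; have hj := j.isLt
      have h2 : (v a i).val < 2 := (v a i).isLt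
      have h3 : (v b j).val < 2 := (v b j).isLt
      by_cases hij : i = j
      · subst hij
        have horthi := horth i
        rw [Nat.mul_eq_zero] at horthi
        rcases horthi with h0 | h0 <;> omega
      · have : i.val ≠ j.val := fun h => hij (Fin.ext h)
        omega
    · -- U' a i, U' b j : go through r
      have h := dist_le_two (v := v) (adj_U'r a i) (adj_U'r b j).symm (hab'' i j)
      rw [wtE_comm V.r, wtE_U'r, wtE_U'r] at h
      have := i.isLt; have := j.isLt
      omega
  · rintro ⟨a, b, hab, hle⟩
    refine ⟨a, b, hab, ?_⟩
    intro i
    by_contra hne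
    have h2 : (v a i).val < 2 := (v a i).isLt
    have h3 : (v b i).val < 2 := (v b i).isLt
    rw [Nat.mul_eq_zero] at hne
    push_neg at hne
    have hva : (v a i).val = 1 := by omega
    have hvb : (v b i).val = 1 := by omega
    have hmem : (V.U a i, V.U' b i) ∈ SF n d a ×ˢ SF n d b :=
      Finset.mem_product.mpr ⟨mem_SF_U a i, mem_SF_U' b i⟩
    have hsup : dist n d v (V.U a i) (V.U' b i) ≤ maxDist n d v a b :=
      Finset.le_sup (f := fun p => dist n d v p.1 p.2) hmem
    have hlow := dist_lower (v := v) (x := V.U a i) (y := V.U' b i)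
      (Or.inl ⟨a, i, rfl⟩) (Or.inr ⟨b, i, rfl⟩) (by simp)
    rw [wtE_Ul, wtE_U'l, wtE_Ur, wtE_U'r, hva, hvb] at hlow
    rw [hM] at hle
    have hi := i.isLt
    omega


end OVGadget
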